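/- Let H1 = p1^2 + p2^2 - 16*a*q2*(q1^2 + 2*q2^2) and H2 = a*q1^2*(q1^2 + 4*q2^2) + p1*(q2*p1 - q1*p2)/2 on R^4 with coordinates (q1, q2, p1, p2). Then the canonical Poisson bracket {H1, H2} vanishes identically. -/

import Mathlib

/-- Canonical Poisson bracket on `ℝ⁴` with coordinates `(x₁, x₂, p₁, p₂)`. -/
noncomputable def pb (f g : ℝ → ℝ → ℝ → ℝ → ℝ) (x1 x2 p1 p2 : ℝ) : ℝ :=
    deriv (fun t => f t x2 p1 p2) x1 * deriv (fun t => g x1 x2 t p2) p1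
  + deriv (fun t => f x1 t p1 p2) x2 * deriv (fun t => g x1 x2 p1 t) p2
  - deriv (fun t => f x1 x2 t p2) p1 * deriv (fun t => g t x2 p1 p2) x1
  - deriv (fun t => f x1 x2 p1 t) p2 * deriv (fun t => g x1 t p1 p2) x2

private lemma hh1 (a q1 q2 p1 p2 : ℝ) :
    HasDerivAt (fun t : ℝ => p1^2 + p2^2 - 16 * a * q2 * (t^2 + 2 * q2^2))
      (-(16 * a * q2 * (2 * q1))) q1 := by
  have := (((hasDerivAt_pow 2 q1).add_const (2 * q2 ^ 2)).const_mul (16 * a * q2)).const_sub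
    (p1 ^ 2 + p2 ^ 2)
  convert this using 1
  all_goals (try funext t) <;> (try simp only [id_eq, Pi.mul_apply, Pi.add_apply]) <;> (try ring)
  all_goals rfl

private lemma hh2 (a q1 q2 p1 p2 : ℝ) :
    HasDerivAt (fun t : ℝ => p1^2 + p2^2 - 16 * a * t * (q1^2 + 2 * t^2))
      (-(16 * a * (q1 ^ 2 + 6 * q2 ^ 2))) q2 := by
  have := ((((hasDerivAt_id q2).const_mul (16 * a)).mul
      (((hasDerivAt_pow 2 q2).const_mul 2).const_add (q1 ^ 2)))).const_sub (p1 ^ 2 + p2 ^ 2)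
  convert this using 1
  all_goals (try funext t) <;> (try simp only [id_eq, Pi.mul_apply, Pi.add_apply]) <;> (try ring)
  all_goals rfl

private lemma hh3 (a q1 q2 p1 p2 : ℝ) :
    HasDerivAt (fun t : ℝ => p1^2 + t^2 - 16 * a * q2 * (q1^2 + 2 * q2^2)) (2 * p2) p2 := by
  have := (((hasDerivAt_pow 2 p2).const_add (p1 ^ 2)).sub_const (16 * a * q2 * (q1 ^ 2 + 2 * q2 ^ 2)))
  convert this using 1
  all_goals (try funext t) <;> (try simp only [id_eq, Pi.mul_apply, Pi.add_apply]) <;> (try ring)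
  all_goals rfl

private lemma hh4 (a q1 q2 p1 p2 : ℝ) :
    HasDerivAt (fun t : ℝ => t^2 + p2^2 - 16 * a * q2 * (q1^2 + 2 * q2^2)) (2 * p1) p1 := by
  have := (((hasDerivAt_pow 2 p1).add_const (p2 ^ 2)).sub_const (16 * a * q2 * (q1 ^ 2 + 2 * q2 ^ 2)))
  convert this using 1
  all_goals (try funext t) <;> (try simp only [id_eq, Pi.mul_apply, Pi.add_apply]) <;> (try ring)
  all_goals rfl

private lemma gg1 (a q1 q2 p1 p2 : ℝ) :
    HasDerivAt (fun t : ℝ => a * t^2 * (t^2 + 4 * q2^2) + p1 * (q2 * p1 - t * p2) / 2)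
      (a * (4 * q1 ^ 3 + 8 * q2 ^ 2 * q1) - p1 * p2 / 2) q1 := by
  have := (((hasDerivAt_pow 2 q1).const_mul a).mul ((hasDerivAt_pow 2 q1).add_const (4 * q2 ^ 2))).add
    (((((hasDerivAt_id q1).mul_const p2).const_sub (q2 * p1)).const_mul p1).div_const 2)
  convert this using 1
  all_goals (try funext t) <;> (try simp only [id_eq, Pi.mul_apply, Pi.add_apply]) <;> (try ring)
  all_goals rfl

private lemma gg2 (a q1 q2 p1 p2 : ℝ) :
    HasDerivAt (fun t : ℝ => a * q1^2 * (q1^2 + 4 * t^2) + p1 * (t * p1 - q1 * p2) / 2)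
      (a * q1 ^ 2 * (8 * q2) + p1 ^ 2 / 2) q2 := by
  have := ((((hasDerivAt_pow 2 q2).const_mul 4).const_add (q1 ^ 2)).const_mul (a * q1 ^ 2)).add
    (((((hasDerivAt_id q2).mul_const p1).sub_const (q1 * p2)).const_mul p1).div_const 2)
  convert this using 1
  all_goals (try funext t) <;> (try simp only [id_eq, Pi.mul_apply, Pi.add_apply]) <;> (try ring)
  all_goals rfl

private lemma gg3 (a q1 q2 p1 p2 : ℝ) :
    HasDerivAt (fun t : ℝ => a * q1^2 * (q1^2 + 4 * q2^2) + t * (q2 * t - q1 * p2) / 2)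
      ((2 * q2 * p1 - q1 * p2) / 2) p1 := by
  have := (((hasDerivAt_id p1).mul (((hasDerivAt_id p1).const_mul q2).sub_const (q1 * p2))).div_const 2).const_add
    (a * q1 ^ 2 * (q1 ^ 2 + 4 * q2 ^ 2))
  convert this using 1
  all_goals (try funext t) <;> (try simp only [id_eq, Pi.mul_apply, Pi.add_apply]) <;> (try ring)
  all_goals rfl

private lemma gg4 (a q1 q2 p1 p2 : ℝ) :
    HasDerivAt (fun t : ℝ => a * q1^2 * (q1^2 + 4 * q2^2) + p1 * (q2 * p1 - q1 * t) / 2)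
      (-(p1 * q1) / 2) p2 := by
  have := (((((hasDerivAt_id p2).const_mul q1).const_sub (q2 * p1)).const_mul p1).div_const 2).const_add
    (a * q1 ^ 2 * (q1 ^ 2 + 4 * q2 ^ 2))
  convert this using 1
  all_goals (try funext t) <;> (try simp only [id_eq, Pi.mul_apply, Pi.add_apply]) <;> (try ring)
  all_goals rfl

theorem henon_heiles_1_involution (a : ℝ) (q1 q2 p1 p2 : ℝ) :
    pb (fun q1 q2 p1 p2 => p1^2 + p2^2 - 16 * a * q2 * (q1^2 + 2 * q2^2))
       (fun q1 q2 p1 p2 => a * q1^2 * (q1^2 + 4 * q2^2) + p1 * (q2 * p1 - q1 * p2) / 2)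
       q1 q2 p1 p2 = 0 := by
  unfold pb
  rw [(hh1 a q1 q2 p1 p2).deriv, (hh2 a q1 q2 p1 p2).deriv, (hh3 a q1 q2 p1 p2).deriv,
      (hh4 a q1 q2 p1 p2).deriv, (gg1 a q1 q2 p1 p2).deriv, (gg2 a q1 q2 p1 p2).deriv,
      (gg3 a q1 q2 p1 p2).deriv, (gg4 a q1 q2 p1 p2).deriv]
  ring
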